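/- Let Ω ⊆ ℝⁿ be open, f ∈ C²(Ω, ℝ), V : ℝ → ℝ^N twice differentiable with |V'(s)| = 1 for all s ∈ f(Ω), and u = V ∘ f. If u satisfies the normal equation |Du|² P^⊥(Du) Δu = 0 on Ω, where P^⊥(Du) is the orthogonal projection onto the orthogonal complement of the range of Du, then |Df(x)|⁴ V''(f(x)) = 0 for all x ∈ Ω; in particular V'' vanishes on f({x ∈ Ω : Df(x) ≠ 0}). -/

import Mathlib

open scoped RealInnerProductSpace BigOperators Topology

noncomputable def frob2 {n N : ℕ} (u : EuclideanSpace ℝ (Fin n) → EuclideanSpace ℝ (Fin N))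
    (x : EuclideanSpace ℝ (Fin n)) : ℝ :=
  ∑ i, ‖fderiv ℝ u x (EuclideanSpace.single i 1)‖ ^ 2

noncomputable def lapl {n N : ℕ} (u : EuclideanSpace ℝ (Fin n) → EuclideanSpace ℝ (Fin N))
    (x : EuclideanSpace ℝ (Fin n)) : EuclideanSpace ℝ (Fin N) :=
  ∑ i, fderiv ℝ (fun y => fderiv ℝ u y (EuclideanSpace.single i 1)) x (EuclideanSpace.single i 1)

noncomputable def perpProj {n N : ℕ}
    (T : EuclideanSpace ℝ (Fin n) →L[ℝ] EuclideanSpace ℝ (Fin N))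
    (w : EuclideanSpace ℝ (Fin N)) : EuclideanSpace ℝ (Fin N) :=
  (Submodule.orthogonalProjection (LinearMap.range (T.toLinearMap))ᗮ w : EuclideanSpace ℝ (Fin N))

noncomputable def inftyLap {n N : ℕ} (u : EuclideanSpace ℝ (Fin n) → EuclideanSpace ℝ (Fin N))
    (x : EuclideanSpace ℝ (Fin n)) : EuclideanSpace ℝ (Fin N) :=
  fderiv ℝ u x (gradient (fun y => (1/2 : ℝ) * frob2 u y) x)
    + frob2 u x • perpProj (fderiv ℝ u x) (lapl u x)

noncomputable def scalarInftyLap {n : ℕ} (f : EuclideanSpace ℝ (Fin n) → ℝ)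
    (x : EuclideanSpace ℝ (Fin n)) : ℝ :=
  ⟪gradient f x, fderiv ℝ (fun y => gradient f y) x (gradient f x)⟫

noncomputable def DuT {n N : ℕ} (u : EuclideanSpace ℝ (Fin n) → EuclideanSpace ℝ (Fin N))
    (x : EuclideanSpace ℝ (Fin n)) (ξ : EuclideanSpace ℝ (Fin N)) : EuclideanSpace ℝ (Fin n) :=
  ContinuousLinearMap.adjoint (fderiv ℝ u x) ξ

/-- If `u = V ∘ f` with `V` twice differentiable of unit speed on `f(Ω)`, and `u` satisfies the
normal equation `|Du|² P^⊥(Du) Δu = 0` on `Ω`, then `|Df|⁴ V''(f(x)) = 0` on `Ω`; in particular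
`V''` vanishes on `f({Df ≠ 0})`. -/
theorem normal_equation_kills_curvature {n N : ℕ}
    (Ω : Set (EuclideanSpace ℝ (Fin n))) (hΩ : IsOpen Ω)
    (f : EuclideanSpace ℝ (Fin n) → ℝ) (hf : ContDiffOn ℝ 2 f Ω)
    (V : ℝ → EuclideanSpace ℝ (Fin N))
    (hV1 : Differentiable ℝ V) (hV2 : Differentiable ℝ (deriv V))
    (hVunit : ∀ s ∈ f '' Ω, ‖deriv V s‖ = 1)
    (u : EuclideanSpace ℝ (Fin n) → EuclideanSpace ℝ (Fin N))
    (hu : ∀ x ∈ Ω, u x = V (f x))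
    (hnormal : ∀ x ∈ Ω, frob2 u x • perpProj (fderiv ℝ u x) (lapl u x) = 0) :
    (∀ x ∈ Ω, ‖gradient f x‖ ^ 4 • deriv (deriv V) (f x) = 0) ∧
    (∀ x ∈ Ω, gradient f x ≠ 0 → deriv (deriv V) (f x) = 0) := by
  have hginner : ∀ (y : EuclideanSpace ℝ (Fin n)) (v : EuclideanSpace ℝ (Fin n)),
      ⟪gradient f y, v⟫ = fderiv ℝ f y v := fun y v => by
    simp [gradient, InnerProductSpace.toDual_symm_apply]
  have hfd : ∀ y ∈ Ω, DifferentiableAt ℝ f y := fun y hy =>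
    (hf.contDiffAt (hΩ.mem_nhds hy)).differentiableAt (by norm_num)
  have hDu : ∀ y ∈ Ω, fderiv ℝ u y = (fderiv ℝ f y).smulRight (deriv V (f y)) := by
    intro y hy
    have hev : u =ᶠ[𝓝 y] fun z => V (f z) :=
      Filter.eventuallyEq_of_mem (hΩ.mem_nhds hy) fun z hz => hu z hz
    rw [hev.fderiv_eq]
    have h1 : HasFDerivAt V ((1 : ℝ →L[ℝ] ℝ).smulRight (deriv V (f y))) (f y) :=
      hasDerivAt_iff_hasFDerivAt.mp (hV1 (f y)).hasDerivAt
    have h2 := h1.comp y (hfd y hy).hasFDerivAt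
    have : HasFDerivAt (fun z => V (f z)) ((fderiv ℝ f y).smulRight (deriv V (f y))) y := by
      exact h2.congr_fderiv (ContinuousLinearMap.ext fun v => by simp)
    exact this.fderiv
  have key : ∀ x ∈ Ω, gradient f x ≠ 0 → deriv (deriv V) (f x) = 0 := by
    intro x hx hg
    set c₁ := deriv V (f x) with hc₁
    set c₂ := deriv (deriv V) (f x) with hc₂
    set g := gradient f x with hgdef
    have hΩx : Ω ∈ 𝓝 x := hΩ.mem_nhds hx
    have hf2 : ContDiffAt ℝ 2 f x := hf.contDiffAt hΩx
    have hc1norm : ‖c₁‖ = 1 := hVunit _ ⟨x, hx, rfl⟩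
    have hgsq : fderiv ℝ f x g = ‖g‖ ^ 2 := by
      rw [← hginner, real_inner_self_eq_norm_sq]
    have hgn : (‖g‖ : ℝ) ^ 2 ≠ 0 := pow_ne_zero 2 (norm_ne_zero_iff.mpr hg)
    -- coordinates of the gradient
    have hcoord : ∀ i, fderiv ℝ f x (EuclideanSpace.single i 1) = g i := fun i => by
      rw [← hginner, EuclideanSpace.inner_single_right]
      simp [hgdef]
    have hnormsq : ∑ i, (g i) ^ 2 = ‖g‖ ^ 2 := by
      rw [EuclideanSpace.norm_eq, Real.sq_sqrt (by positivity)]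
      simp [sq_abs]
    -- frob2
    have hfrob : frob2 u x = ‖g‖ ^ 2 := by
      unfold frob2
      rw [hDu x hx, ← hc₁]
      simp only [ContinuousLinearMap.smulRight_apply, norm_smul, hc1norm, mul_one, hcoord,
        Real.norm_eq_abs, sq_abs]
      exact hnormsq
    -- laplacian
    have hff : DifferentiableAt ℝ (fderiv ℝ f) x :=
      (hf2.fderiv_right (m := 1) (by norm_num)).differentiableAt (by norm_num)
    have hVf : ∀ i, fderiv ℝ (fun y => deriv V (f y)) x (EuclideanSpace.single i 1)
        = (g i) • c₂ := by
      intro i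
      have h1 : HasFDerivAt (deriv V) ((1 : ℝ →L[ℝ] ℝ).smulRight c₂) (f x) :=
        hasDerivAt_iff_hasFDerivAt.mp (hV2 (f x)).hasDerivAt
      have h2 := h1.comp x (hfd x hx).hasFDerivAt
      have h3 : HasFDerivAt (fun y => deriv V (f y)) ((fderiv ℝ f x).smulRight c₂) x := by
        exact h2.congr_fderiv (ContinuousLinearMap.ext fun v => by simp)
      rw [h3.fderiv]
      simp [hcoord i]
    have hterm : ∀ i, fderiv ℝ (fun y => fderiv ℝ u y (EuclideanSpace.single i 1)) x
          (EuclideanSpace.single i 1)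
        = (fderiv ℝ (fun y => fderiv ℝ f y (EuclideanSpace.single i 1)) x
            (EuclideanSpace.single i 1)) • c₁ + ((g i) ^ 2) • c₂ := by
      intro i
      set e := EuclideanSpace.single (𝕜 := ℝ) i (1 : ℝ) with he
      have hev : (fun y => fderiv ℝ u y e) =ᶠ[𝓝 x]
          fun y => (fderiv ℝ f y e) • deriv V (f y) :=
        Filter.eventuallyEq_of_mem hΩx fun y hy => by rw [hDu y hy]; rfl
      rw [hev.fderiv_eq]
      have d1 : DifferentiableAt ℝ (fun y => fderiv ℝ f y e) x :=
        hff.clm_apply (differentiableAt_const e)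
      have d2 : DifferentiableAt ℝ (fun y => deriv V (f y)) x :=
        (hV2 (f x)).comp x (hfd x hx)
      rw [fderiv_fun_smul d1 d2]
      simp only [ContinuousLinearMap.add_apply, ContinuousLinearMap.smul_apply,
        ContinuousLinearMap.smulRight_apply]
      rw [hVf i, hcoord i]
      rw [smul_smul, ← sq]
      ring_nf
      rw [add_comm]
    have hlapl : lapl u x
        = (∑ i, fderiv ℝ (fun y => fderiv ℝ f y (EuclideanSpace.single i 1)) x
            (EuclideanSpace.single i 1)) • c₁ + (‖g‖ ^ 2) • c₂ := by
      unfold lapl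
      rw [Finset.sum_congr rfl fun i _ => hterm i, Finset.sum_add_distrib,
        ← Finset.sum_smul, ← Finset.sum_smul, hnormsq]
    -- range of Du is the span of c₁
    have hrange : LinearMap.range ((fderiv ℝ u x).toLinearMap) = (ℝ ∙ c₁) := by
      rw [hDu x hx]
      apply le_antisymm
      · rintro w ⟨v, rfl⟩
        exact Submodule.smul_mem _ _ (Submodule.mem_span_singleton_self c₁)
      · rw [Submodule.span_singleton_le_iff_mem]
        refine ⟨(‖g‖ ^ 2)⁻¹ • g, ?_⟩
        simp [map_smul, hgsq, smul_smul, inv_mul_cancel₀ hgn, hc₁]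
    -- orthogonality of c₂ and c₁
    have horth : ⟪c₁, c₂⟫ = 0 := by
      have hsurj : LinearMap.range (fderiv ℝ f x : EuclideanSpace ℝ (Fin n) →ₗ[ℝ] ℝ) = ⊤ := by
        rw [LinearMap.range_eq_top]
        intro r
        exact ⟨(r / ‖g‖ ^ 2) • g, by simp [map_smul, hgsq, div_mul_cancel₀ _ hgn]⟩
      have hstrict : HasStrictFDerivAt f (fderiv ℝ f x) x := hf2.hasStrictFDerivAt (by norm_num)
      have hmap := hstrict.map_nhds_eq_of_surj hsurj
      have hmem : f '' Ω ∈ 𝓝 (f x) := by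
        rw [← hmap]; exact Filter.image_mem_map hΩx
      have hevone : (fun s => ⟪deriv V s, deriv V s⟫) =ᶠ[𝓝 (f x)] fun _ => (1 : ℝ) :=
        Filter.eventuallyEq_of_mem hmem fun s hs => by
          rw [real_inner_self_eq_norm_sq, hVunit s hs]; norm_num
      have hd : HasDerivAt (fun s => ⟪deriv V s, deriv V s⟫) (⟪c₁, c₂⟫ + ⟪c₂, c₁⟫) (f x) :=
        HasDerivAt.inner ℝ (hV2 (f x)).hasDerivAt (hV2 (f x)).hasDerivAt
      have h0 : deriv (fun s => ⟪deriv V s, deriv V s⟫) (f x) = 0 := by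
        rw [hevone.deriv_eq]; simp
      rw [hd.deriv] at h0
      have hs := real_inner_comm c₁ c₂
      linarith
    -- projection computation
    have hmemperp : c₂ ∈ (ℝ ∙ c₁)ᗮ := by
      rw [Submodule.mem_orthogonal_singleton_iff_inner_left]
      rw [real_inner_comm]; exact horth
    have hperp : perpProj (fderiv ℝ u x) (lapl u x) = (‖g‖ ^ 2) • c₂ := by
      have hP : ∀ (K K' : Submodule ℝ (EuclideanSpace ℝ (Fin N))) (h : K = K') (w),
          ((Submodule.orthogonalProjection Kᗮ w : EuclideanSpace ℝ (Fin N)))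
            = Submodule.orthogonalProjectionOnto K'ᗮ w := by
        rintro K K' rfl w; rfl
      unfold perpProj
      rw [hP _ _ hrange, hlapl, map_add, map_smul, map_smul,
        Submodule.orthogonalProjectionOnto_orthogonalComplement_singleton_eq_zero]
      simp [← Submodule.starProjection_apply, Submodule.starProjection_eq_self_iff.mpr hmemperp]
    have := hnormal x hx
    rw [hfrob, hperp, smul_smul] at this
    have hne : ‖g‖ ^ 2 * ‖g‖ ^ 2 ≠ 0 := mul_ne_zero hgn hgn
    rcases smul_eq_zero.mp this with h | h
    · exact absurd h hne
    · exact h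
  refine ⟨?_, key⟩
  intro x hx
  by_cases hg : gradient f x = 0
  · simp [hg]
  · simp [key x hx hg]
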